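/- Let E be a finite-dimensional real inner product space, K ⊆ E a nonempty closed convex set, and F : E → E continuous and pseudomonotone on K. If there exists x̂ ∈ K such that F(x̂) lies in the topological interior of the dual cone of the recession cone of K, i.e. F(x̂) ∈ int{d ∈ E | ⟪v, d⟫ ≥ 0 for all v ∈ K∞}, then the solution set SOL(K, F) is nonempty, convex and compact. -/

import Mathlib

open RealInnerProductSpace

open Filter Topology

theorem berge_thm {E : Type*} [NormedAddCommGroup E] [NormedSpace ℝ E] {ι : Type*}
    [DecidableEq ι] :
    ∀ (n : ℕ) (s : Finset ι) (C : ι → Set E), s.card = n → 2 ≤ n →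
    (∀ i ∈ s, Convex ℝ (C i)) → (∀ i ∈ s, IsCompact (C i)) →
    Convex ℝ (⋃ i ∈ s, C i) →
    (∀ j ∈ s, (⋂ i ∈ s.erase j, C i).Nonempty) →
    (⋂ i ∈ s, C i).Nonempty := by
  intro n
  induction n using Nat.strong_induction_on with
  | _ n ih =>
  intro s C hcard hn hconv hcomp hU hpair
  rcases eq_or_lt_of_le hn with h2 | h3
  · -- base case : two sets
    rcases Finset.card_eq_two.mp (hcard.trans h2.symm) with ⟨a, b, hab, rfl⟩
    have ha : a ∈ ({a, b} : Finset ι) := by simp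
    have hb : b ∈ ({a, b} : Finset ι) := by simp
    obtain ⟨q, hq⟩ := hpair a ha
    have hqb : q ∈ C b := by
      simp only [Set.mem_iInter] at hq
      exact hq b (Finset.mem_erase.mpr ⟨hab.symm, hb⟩)
    obtain ⟨p, hp⟩ := hpair b hb
    have hpa : p ∈ C a := by
      simp only [Set.mem_iInter] at hp
      exact hp a (Finset.mem_erase.mpr ⟨hab, ha⟩)
    set γ : ℝ → E := fun t => p + t • (q - p) with hγ
    have hγcont : Continuous γ := by fun_prop
    set T : Set ℝ := Set.Icc (0:ℝ) 1 ∩ γ ⁻¹' (C a) with hT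
    have hTclosed : IsClosed T :=
      isClosed_Icc.inter ((hcomp a ha).isClosed.preimage hγcont)
    have hT0 : (0:ℝ) ∈ T := by
      constructor
      · simp
      · simp [hγ, hpa]
    have hTbdd : BddAbove T := bddAbove_Icc.mono Set.inter_subset_left
    set t₀ := sSup T with ht₀def
    have ht₀T : t₀ ∈ T := hTclosed.csSup_mem ⟨0, hT0⟩ hTbdd
    have ht₀a : γ t₀ ∈ C a := ht₀T.2
    have hseg : ∀ t ∈ Set.Icc (0:ℝ) 1, γ t ∈ C a ∪ C b := by
      intro t ht
      have : γ t ∈ ⋃ i ∈ ({a, b} : Finset ι), C i := by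
        have hsub : segment ℝ p q ⊆ ⋃ i ∈ ({a, b} : Finset ι), C i := by
          apply hU.segment_subset
          · exact Set.mem_biUnion ha hpa
          · exact Set.mem_biUnion hb hqb
        apply hsub
        rw [segment_eq_image']
        exact ⟨t, ht, rfl⟩
      simpa using this
    have ht₀b : γ t₀ ∈ C b := by
      rcases eq_or_lt_of_le ht₀T.1.2 with h1 | h1
      · have : γ t₀ = q := by simp [hγ, h1]
        rw [this]; exact hqb
      · -- approach from the right
        set u : ℕ → ℝ := fun m => t₀ + (1 - t₀)/(m + 2) with hu
        have hupos : ∀ m : ℕ, t₀ < u m := by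
          intro m
          have : (0:ℝ) < (1 - t₀)/(m + 2) := by
            apply div_pos (by linarith) (by positivity)
          simp [hu]; linarith
        have hule : ∀ m : ℕ, u m ≤ 1 := by
          intro m
          have hm0 : (0:ℝ) ≤ (m:ℝ) := Nat.cast_nonneg m
          have h2le : (1:ℝ) ≤ (m:ℝ) + 2 := by linarith
          have : (1 - t₀)/(m + 2) ≤ (1 - t₀) := by
            apply div_le_self (by linarith [ht₀T.1.2]) h2le
          simp [hu]; linarith
        have huIcc : ∀ m : ℕ, u m ∈ Set.Icc (0:ℝ) 1 := fun m =>
          ⟨le_of_lt (lt_of_le_of_lt ht₀T.1.1 (hupos m)), hule m⟩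
        have hub : ∀ m : ℕ, γ (u m) ∈ C b := by
          intro m
          rcases hseg (u m) (huIcc m) with h | h
          · exact absurd (le_csSup hTbdd ⟨huIcc m, h⟩) (not_le.mpr (hupos m))
          · exact h
        have hulim : Tendsto u atTop (𝓝 t₀) := by
          rw [hu]
          have : Tendsto (fun m : ℕ => (1 - t₀)/(m + 2)) atTop (𝓝 0) := by
            apply Tendsto.div_atTop tendsto_const_nhds
            apply tendsto_atTop_add_const_right
            exact tendsto_natCast_atTop_atTop
          simpa using tendsto_const_nhds.add this
        exact (hcomp b hb).isClosed.mem_of_tendsto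
          ((hγcont.tendsto t₀).comp hulim) (Eventually.of_forall hub)
    refine ⟨γ t₀, ?_⟩
    simp only [Set.mem_iInter]
    intro i hi
    rcases Finset.mem_insert.mp hi with rfl | hi
    · exact ht₀a
    · rcases Finset.mem_singleton.mp hi with rfl
      exact ht₀b
  · -- inductive step : n ≥ 3
    by_contra hempty
    rw [Set.not_nonempty_iff_eq_empty] at hempty
    have hnpos : 0 < n := by omega
    obtain ⟨j₀, hj₀⟩ : ∃ j, j ∈ s := Finset.card_pos.mp (hcard ▸ hnpos) |>.imp (fun _ h => h)
    set Γ : Set E := ⋂ i ∈ s.erase j₀, C i with hΓdef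
    obtain ⟨g, hg⟩ := hpair j₀ hj₀
    have hΓconv : Convex ℝ Γ := by
      apply convex_iInter₂
      intro i hi
      exact hconv i (Finset.mem_of_mem_erase hi)
    have hscard : 2 ≤ s.card := hcard ▸ hn
    obtain ⟨i₁, hi₁⟩ : ∃ i, i ∈ s.erase j₀ := by
      have : 0 < (s.erase j₀).card := by
        rw [Finset.card_erase_of_mem hj₀]; omega
      exact (Finset.card_pos.mp this).imp (fun _ h => h)
    have hΓcomp : IsCompact Γ := by
      apply IsCompact.of_isClosed_subset (hcomp i₁ (Finset.mem_of_mem_erase hi₁))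
      · exact isClosed_biInter fun i hi => (hcomp i (Finset.mem_of_mem_erase hi)).isClosed
      · exact Set.biInter_subset_of_mem hi₁
    have hdisj : Disjoint Γ (C j₀) := by
      rw [Set.disjoint_left]
      intro x hxΓ hxj₀
      have : x ∈ ⋂ i ∈ s, C i := by
        simp only [hΓdef, Set.mem_iInter] at hxΓ
        simp only [Set.mem_iInter]
        intro i hi
        by_cases hij : i = j₀
        · exact hij ▸ hxj₀
        · exact hxΓ i (Finset.mem_erase.mpr ⟨hij, hi⟩)
      rw [hempty] at this
      exact this
    obtain ⟨f, u, v, hfu, huv, hfv⟩ :=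
      geometric_hahn_banach_compact_closed hΓconv hΓcomp (hconv j₀ hj₀)
        (hcomp j₀ hj₀).isClosed hdisj
    set α : ℝ := (u + v)/2 with hα
    have hΓα : ∀ x ∈ Γ, f x < α := fun x hx => lt_of_lt_of_le (hfu x hx) (by rw [hα]; linarith)
    have hj₀α : ∀ x ∈ C j₀, α < f x := fun x hx => lt_of_le_of_lt (by rw [hα]; linarith) (hfv x hx)
    set H : Set E := {x | f x = α} with hH
    have hHclosed : IsClosed H := isClosed_eq f.continuous continuous_const
    have hHconv : Convex ℝ H := by
      have : H = {x | f x ≤ α} ∩ {x | α ≤ f x} := by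
        ext x; simp [hH, le_antisymm_iff, and_comm]
      rw [this]
      exact (convex_halfSpace_le (f.toLinearMap.isLinear) α).inter
        (convex_halfSpace_ge (f.toLinearMap.isLinear) α)
    set s' := s.erase j₀ with hs'
    set C' : ι → Set E := fun i => C i ∩ H with hC'
    -- crossing point production
    have hcross : ∀ (a b : E), f a < α → α < f b →
        (segment ℝ a b ∩ H).Nonempty := by
      intro a b hfa hfb
      set t : ℝ := (α - f a)/(f b - f a) with htdef
      have hba : 0 < f b - f a := by linarith
      have ht0 : 0 ≤ t := div_nonneg (by linarith) (le_of_lt hba)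
      have ht1 : t ≤ 1 := by
        rw [htdef, div_le_one hba]; linarith
      refine ⟨a + t • (b - a), ?_, ?_⟩
      · rw [segment_eq_image']; exact ⟨t, ⟨ht0, ht1⟩, rfl⟩
      · show f (a + t • (b - a)) = α
        rw [map_add, map_smul, map_sub]
        simp only [smul_eq_mul]
        rw [htdef, div_mul_cancel₀ _ (ne_of_gt hba)]; ring
    have key : (⋂ i ∈ s', C' i).Nonempty := by
      apply ih (n - 1) (by omega) s' C'
      · rw [hs', Finset.card_erase_of_mem hj₀, hcard]
      · omega
      · intro i hi
        exact (hconv i (Finset.mem_of_mem_erase hi)).inter hHconv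
      · intro i hi
        exact ((hcomp i (Finset.mem_of_mem_erase hi)).inter_right hHclosed)
      · -- union of C' over s' is (⋃ i ∈ s, C i) ∩ H, convex
        have : (⋃ i ∈ s', C' i) = (⋃ i ∈ s, C i) ∩ H := by
          ext x
          constructor
          · rintro hx
            simp only [Set.mem_iUnion] at hx
            obtain ⟨i, hi, hxi, hxH⟩ := hx
            exact ⟨Set.mem_biUnion (Finset.mem_of_mem_erase hi) hxi, hxH⟩
          · rintro ⟨hx, hxH⟩
            simp only [Set.mem_iUnion] at hx
            obtain ⟨i, hi, hxi⟩ := hx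
            have hij : i ≠ j₀ := by
              intro h
              subst h
              exact absurd (hxH : f x = α) (ne_of_gt (hj₀α x hxi))
            exact Set.mem_biUnion (Finset.mem_erase.mpr ⟨hij, hi⟩) ⟨hxi, hxH⟩
        rw [this]
        exact hU.inter hHconv
      · -- pairwise intersections of the smaller family
        intro j hj
        obtain ⟨a, ha⟩ := hpair j (Finset.mem_of_mem_erase hj)
        have haj₀ : a ∈ C j₀ := by
          simp only [Set.mem_iInter] at ha
          exact ha j₀ (Finset.mem_erase.mpr ⟨(Finset.mem_erase.mp hj).1.symm, hj₀⟩)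
        have hfa : α < f a := hj₀α a haj₀
        have hfg : f g < α := hΓα g (by exact hg)
        obtain ⟨z, hzseg, hzH⟩ := hcross g a hfg hfa
        refine ⟨z, ?_⟩
        simp only [Set.mem_iInter]
        intro i hi
        have his : i ∈ s := Finset.mem_of_mem_erase (Finset.mem_of_mem_erase hi)
        have hine_j : i ≠ j := (Finset.mem_erase.mp hi).1
        have hine_j₀ : i ≠ j₀ := (Finset.mem_erase.mp (Finset.mem_of_mem_erase hi)).1
        have hgi : g ∈ C i := by
          simp only [Set.mem_iInter] at hg
          exact hg i (Finset.mem_erase.mpr ⟨hine_j₀, his⟩)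
        have hai : a ∈ C i := by
          simp only [Set.mem_iInter] at ha
          exact ha i (Finset.mem_erase.mpr ⟨hine_j, his⟩)
        exact ⟨(hconv i his).segment_subset hgi hai hzseg, hzH⟩
    obtain ⟨z, hz⟩ := key
    have hz' : ∀ i ∈ s', z ∈ C' i := fun i hi => by
      have := Set.mem_iInter.mp hz i
      exact Set.mem_iInter.mp this hi
    have hzΓ : z ∈ Γ := by
      simp only [hΓdef, Set.mem_iInter]
      intro i hi
      exact (hz' i hi).1
    have hzH : f z = α := (hz' i₁ hi₁).2
    exact absurd hzH (ne_of_lt (hΓα z hzΓ))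

theorem minty_finite {E : Type*} [NormedAddCommGroup E] [InnerProductSpace ℝ E]
    {K : Set E} (hKconv : Convex ℝ K) (F : E → E)
    (hpseudo : ∀ x ∈ K, ∀ y ∈ K, 0 ≤ ⟪F x, y - x⟫ → 0 ≤ ⟪F y, y - x⟫) :
    ∀ (n : ℕ) (s : Finset E), s.card = n → s.Nonempty → ↑s ⊆ K →
    ∃ x ∈ convexHull ℝ (s : Set E), ∀ y ∈ s, 0 ≤ ⟪F y, y - x⟫ := by
  intro n
  induction n using Nat.strong_induction_on with
  | _ n ih =>
  intro s hcard hne hsK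
  classical
  rcases Nat.lt_or_ge n 2 with hn2 | hn2
  · -- n = 1
    have h1 : s.card = 1 := by
      have := Finset.card_pos.mpr hne
      omega
    obtain ⟨y, rfl⟩ := Finset.card_eq_one.mp h1
    refine ⟨y, ?_, ?_⟩
    · exact subset_convexHull ℝ _ (by simp)
    · intro z hz
      rcases Finset.mem_singleton.mp hz with rfl
      simp
  · -- n ≥ 2 : use Berge
    have hullK : convexHull ℝ (s : Set E) ⊆ K := convexHull_min hsK hKconv
    set C : E → Set E := fun y =>
      convexHull ℝ (s : Set E) ∩ {x | ⟪F y, x⟫ ≤ ⟪F y, y⟫} with hC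
    have hlin : ∀ v : E, IsLinearMap ℝ (fun x : E => ⟪v, x⟫) := fun v =>
      ⟨fun a b => inner_add_right v a b, fun c a => real_inner_smul_right v a c⟩
    have hCconv : ∀ y ∈ s, Convex ℝ (C y) := fun y _ =>
      (convex_convexHull ℝ _).inter (convex_halfSpace_le (hlin (F y)) _)
    have hCcomp : ∀ y ∈ s, IsCompact (C y) := fun y _ =>
      (s.finite_toSet.isCompact_convexHull (𝕜 := ℝ)).inter_right
        (isClosed_le (continuous_const.inner continuous_id) continuous_const)
    have hmemC : ∀ y x, x ∈ convexHull ℝ (s : Set E) → 0 ≤ ⟪F y, y - x⟫ → x ∈ C y := by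
      intro y x hx h
      refine ⟨hx, ?_⟩
      rw [inner_sub_right] at h
      simpa using sub_nonneg.mp (by linarith)
    have hUnion : (⋃ y ∈ s, C y) = convexHull ℝ (s : Set E) := by
      apply Set.Subset.antisymm
      · intro x hx
        simp only [Set.mem_iUnion] at hx
        obtain ⟨y, _, hxy, _⟩ := hx
        exact hxy
      · intro x hx
        rw [s.convexHull_eq] at hx
        obtain ⟨w, hw0, hw1, hwx⟩ := hx
        have hx : x ∈ convexHull ℝ (s : Set E) := by
          rw [s.convexHull_eq]; exact ⟨w, hw0, hw1, hwx⟩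
        have hxK : x ∈ K := hullK hx
        -- find y ∈ s with 0 ≤ ⟪F x, y - x⟫
        have hkey : ∃ y ∈ s, 0 ≤ ⟪F x, y - x⟫ := by
          by_contra hcon
          push_neg at hcon
          have hsum : ∑ y ∈ s, w y • (y - x) = 0 := by
            have hcm : ∑ y ∈ s, w y • y = x := by
              rw [← hwx, Finset.centerMass_eq_of_sum_1 _ _ hw1]
              simp
            calc ∑ y ∈ s, w y • (y - x)
                = (∑ y ∈ s, w y • y) - (∑ y ∈ s, w y) • x := by
                  rw [Finset.sum_smul]
                  simp [smul_sub, Finset.sum_sub_distrib]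
              _ = 0 := by rw [hcm, hw1, one_smul, sub_self]
          have hsum2 : ∑ y ∈ s, w y * ⟪F x, y - x⟫ = 0 := by
            have : ∑ y ∈ s, w y * ⟪F x, y - x⟫ = ⟪F x, ∑ y ∈ s, w y • (y - x)⟫ := by
              rw [inner_sum]
              congr 1
              ext y
              rw [real_inner_smul_right]
            rw [this, hsum, inner_zero_right]
          have hzero : ∀ y ∈ s, w y * ⟪F x, y - x⟫ = 0 := by
            apply Finset.sum_eq_zero_iff_of_nonpos ?_ |>.mp hsum2
            intro y hy
            exact mul_nonpos_of_nonneg_of_nonpos (hw0 y hy) (le_of_lt (hcon y hy))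
          have hw00 : ∀ y ∈ s, w y = 0 := by
            intro y hy
            rcases mul_eq_zero.mp (hzero y hy) with h | h
            · exact h
            · exact absurd h (ne_of_lt (hcon y hy))
          rw [Finset.sum_eq_zero hw00] at hw1
          norm_num at hw1
        obtain ⟨y, hy, hxy⟩ := hkey
        exact Set.mem_biUnion hy
          (hmemC y x hx (hpseudo x hxK y (hsK hy) hxy))
    have hpairwise : ∀ j ∈ s, (⋂ y ∈ s.erase j, C y).Nonempty := by
      intro j hj
      have hcard' : (s.erase j).card = n - 1 := by
        rw [Finset.card_erase_of_mem hj, hcard]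
      have hne' : (s.erase j).Nonempty := by
        rw [← Finset.card_pos, hcard']; omega
      obtain ⟨x, hxhull, hx⟩ := ih (n - 1) (by omega) (s.erase j) hcard' hne'
        (Set.Subset.trans (by exact_mod_cast Finset.coe_subset.mpr (Finset.erase_subset j s)) hsK)
      have hxhull' : x ∈ convexHull ℝ (s : Set E) :=
        convexHull_mono (by exact_mod_cast Finset.coe_subset.mpr (Finset.erase_subset j s)) hxhull
      refine ⟨x, ?_⟩
      simp only [Set.mem_iInter]
      intro y hy
      exact hmemC y x hxhull' (hx y hy)
    obtain ⟨z, hz⟩ := berge_thm n s C hcard hn2 hCconv hCcomp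
      (hUnion ▸ convex_convexHull ℝ (s : Set E)) hpairwise
    have hz' : ∀ y ∈ s, z ∈ C y := fun y hy =>
      Set.mem_iInter.mp (Set.mem_iInter.mp hz y) hy
    obtain ⟨y₀, hy₀⟩ := hne
    refine ⟨z, (hz' y₀ hy₀).1, ?_⟩
    intro y hy
    have h2 : ⟪F y, z⟫ ≤ ⟪F y, y⟫ := (hz' y hy).2
    rw [inner_sub_right]
    linarith
open Filter Topology RealInnerProductSpace

theorem bound_aux {E : Type*} [NormedAddCommGroup E] [InnerProductSpace ℝ E]
    [FiniteDimensional ℝ E]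
    {K : Set E} (hKc : IsClosed K) (hKconv : Convex ℝ K)
    {x₀ : E} (hx₀ : x₀ ∈ K) {p : E}
    (hint : p ∈ interior {d : E |
      ∀ v ∈ {d' : E | ∀ x ∈ K, ∀ t : ℝ, 0 ≤ t → x + t • d' ∈ K}, 0 ≤ ⟪v, d⟫}) :
    ∃ R : ℝ, ∀ x ∈ K, ⟪p, x - x₀⟫ ≤ 0 → ‖x - x₀‖ ≤ R := by
  by_contra hcon
  push_neg at hcon
  have hseq : ∀ m : ℕ, ∃ x, x ∈ K ∧ ⟪p, x - x₀⟫ ≤ 0 ∧ (m : ℝ) < ‖x - x₀‖ := by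
    intro m
    obtain ⟨x, hx1, hx2, hx3⟩ := hcon m
    exact ⟨x, hx1, hx2, hx3⟩
  choose u hu1 hu2 hu3 using hseq
  have hnorm_pos : ∀ m : ℕ, 0 < ‖u m - x₀‖ := fun m =>
    lt_of_le_of_lt (Nat.cast_nonneg m) (hu3 m)
  set dseq : ℕ → E := fun m => ‖u m - x₀‖⁻¹ • (u m - x₀) with hdseq
  have hdmem : ∀ m, dseq m ∈ Metric.sphere (0:E) 1 := by
    intro m
    rw [Metric.mem_sphere, dist_zero_right, hdseq]
    rw [norm_smul, norm_inv, norm_norm]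
    exact inv_mul_cancel₀ (ne_of_gt (hnorm_pos m))
  obtain ⟨d, hdsp, φ, hφ, hdtend⟩ :=
    (isCompact_sphere (0:E) 1).tendsto_subseq hdmem
  have hd1 : ‖d‖ = 1 := by
    rw [← dist_zero_right]; exact hdsp
  set r : ℕ → ℝ := fun n => ‖u (φ n) - x₀‖ with hr
  have hrpos : ∀ n, 0 < r n := fun n => hnorm_pos (φ n)
  have hrtop : Tendsto r atTop atTop := by
    apply tendsto_atTop_mono (fun n => le_of_lt ?_) tendsto_natCast_atTop_atTop
    calc (n : ℝ) ≤ (φ n : ℝ) := by exact_mod_cast hφ.le_apply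
    _ < r n := hu3 (φ n)
  -- d is a recession direction of K
  have hdrec : ∀ x ∈ K, ∀ t : ℝ, 0 ≤ t → x + t • d ∈ K := by
    intro x hx t ht
    rcases eq_or_lt_of_le ht with rfl | htpos
    · simpa using hx
    · set w : ℕ → E := fun n => (1 - t / r n) • x + (t / r n) • u (φ n) with hw
      have hweq : ∀ n, w n = x + t • (dseq ∘ φ) n + (t / r n) • (x₀ - x) := by
        intro n
        have hrne : r n ≠ 0 := ne_of_gt (hrpos n)
        simp only [hw, hdseq, Function.comp_apply, hr]
        match_scalars <;> (field_simp; try ring)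
      have hwtend : Tendsto w atTop (𝓝 (x + t • d)) := by
        have h1 : Tendsto (fun n => x + t • (dseq ∘ φ) n) atTop (𝓝 (x + t • d)) :=
          tendsto_const_nhds.add (hdtend.const_smul t)
        have h2 : Tendsto (fun n => (t / r n) • (x₀ - x)) atTop (𝓝 (0 : E)) := by
          have : Tendsto (fun n => t / r n) atTop (𝓝 0) :=
            Tendsto.div_atTop tendsto_const_nhds hrtop
          simpa using this.smul_const (x₀ - x)
        have := h1.add h2
        rw [add_zero] at this
        exact this.congr (fun n => (hweq n).symm)
      apply hKc.mem_of_tendsto hwtend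
      filter_upwards [hrtop.eventually_ge_atTop t] with n hn
      have h01 : 0 ≤ t / r n := div_nonneg ht (le_of_lt (hrpos n))
      have h02 : t / r n ≤ 1 := div_le_one_of_le₀ hn (le_of_lt (hrpos n))
      exact hKconv hx (hu1 (φ n)) (by linarith) h01 (by ring)
  -- inner product of p with d is ≤ 0
  have hpd : ⟪p, d⟫ ≤ 0 := by
    have hlim : Tendsto (fun n => ⟪p, (dseq ∘ φ) n⟫) atTop (𝓝 ⟪p, d⟫) :=
      tendsto_const_nhds.inner hdtend
    apply le_of_tendsto hlim
    filter_upwards with n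
    simp only [Function.comp_apply, hdseq, real_inner_smul_right]
    exact mul_nonpos_of_nonneg_of_nonpos (inv_nonneg.mpr (norm_nonneg _)) (hu2 (φ n))
  -- interior gives strict positivity
  rw [mem_interior_iff_mem_nhds, Metric.mem_nhds_iff] at hint
  obtain ⟨ε, hε, hball⟩ := hint
  have hq : p - (ε/2) • d ∈ Metric.ball p ε := by
    rw [Metric.mem_ball, dist_eq_norm]
    have : p - (ε/2) • d - p = -((ε/2) • d) := by abel
    rw [this, norm_neg, norm_smul, hd1, mul_one, Real.norm_eq_abs, abs_of_pos (by linarith)]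
    linarith
  have hqd := hball hq d hdrec
  rw [inner_sub_right, real_inner_smul_right, real_inner_self_eq_norm_sq, hd1] at hqd
  have : ⟪d, p⟫ = ⟪p, d⟫ := (real_inner_comm d p).symm
  rw [this] at hqd
  nlinarith

theorem stmt_9 {E : Type*} [NormedAddCommGroup E] [InnerProductSpace ℝ E]
    [FiniteDimensional ℝ E]
    (K : Set E) (hK : K.Nonempty) (hKc : IsClosed K) (hKconv : Convex ℝ K)
    (F : E → E) (hF : Continuous F)
    (hpseudo : ∀ x ∈ K, ∀ y ∈ K, 0 ≤ ⟪F x, y - x⟫ → 0 ≤ ⟪F y, y - x⟫)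
    (x₀ : E) (hx₀ : x₀ ∈ K)
    (hint : F x₀ ∈ interior {d : E |
      ∀ v ∈ {d' : E | ∀ x ∈ K, ∀ t : ℝ, 0 ≤ t → x + t • d' ∈ K}, 0 ≤ ⟪v, d⟫}) :
    {x ∈ K | ∀ y ∈ K, 0 ≤ ⟪F x, y - x⟫}.Nonempty ∧
      Convex ℝ {x ∈ K | ∀ y ∈ K, 0 ≤ ⟪F x, y - x⟫} ∧
      IsCompact {x ∈ K | ∀ y ∈ K, 0 ≤ ⟪F x, y - x⟫} := by
  classical
  obtain ⟨R, hR⟩ := bound_aux hKc hKconv hx₀ hint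
  set S : Set E := {x ∈ K | ∀ y ∈ K, 0 ≤ ⟪F y, y - x⟫} with hSdef
  set T : Set E := {x ∈ K | ∀ y ∈ K, 0 ≤ ⟪F x, y - x⟫} with hTdef
  -- Minty's lemma : S ⊆ T
  have hST : S ⊆ T := by
    rintro x ⟨hxK, hx⟩
    refine ⟨hxK, ?_⟩
    intro y hy
    set g : ℝ → ℝ := fun t => ⟪F (x + t • (y - x)), y - x⟫ with hg
    have hgc : Continuous g :=
      (hF.comp (continuous_const.add (continuous_id.smul continuous_const))).inner
        continuous_const
    have hgpos : ∀ t ∈ Set.Ioc (0:ℝ) 1, 0 ≤ g t := by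
      intro t ht
      set w := x + t • (y - x) with hwdef
      have hwK : w ∈ K := by
        have hmem := hKconv hxK hy (by linarith [ht.2] : (0:ℝ) ≤ 1 - t)
          (le_of_lt ht.1) (by ring)
        have heq : (1 - t) • x + t • y = w := by
          rw [hwdef]; module
        rwa [heq] at hmem
      have h0 := hx w hwK
      have hws : w - x = t • (y - x) := by rw [hwdef]; abel
      rw [hws, real_inner_smul_right] at h0
      exact nonneg_of_mul_nonneg_right h0 ht.1
    have hg0 : g 0 = ⟪F x, y - x⟫ := by simp [hg]
    have hlim : Filter.Tendsto g (nhdsWithin 0 (Set.Ioi 0)) (nhds (g 0)) :=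
      (hgc.tendsto 0).mono_left nhdsWithin_le_nhds
    rw [hg0] at hlim
    apply ge_of_tendsto hlim
    filter_upwards [Ioc_mem_nhdsGT_of_mem (Set.mem_Ico.mpr ⟨le_refl 0, zero_lt_one⟩)]
      with t ht
    exact hgpos t ht
  have hTS : T ⊆ S := by
    rintro x ⟨hxK, hx⟩
    exact ⟨hxK, fun y hy => hpseudo x hxK y hy (hx y hy)⟩
  have hTSeq : T = S := Set.Subset.antisymm hTS hST
  -- S is contained in the ball of radius R
  have hSball : S ⊆ Metric.closedBall x₀ R := by
    rintro x ⟨hxK, hx⟩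
    have h1 : 0 ≤ ⟪F x₀, x₀ - x⟫ := hx x₀ hx₀
    have h2 : ⟪F x₀, x - x₀⟫ ≤ 0 := by
      have : x - x₀ = -(x₀ - x) := by abel
      rw [this, inner_neg_right]; linarith
    rw [Metric.mem_closedBall, dist_eq_norm]
    exact hR x hxK h2
  -- S is closed
  have hSclosed : IsClosed S := by
    have : S = K ∩ ⋂ y ∈ K, {x : E | 0 ≤ ⟪F y, y - x⟫} := by
      ext x
      simp only [hSdef, Set.mem_setOf_eq, Set.mem_inter_iff, Set.mem_iInter]
    rw [this]
    refine hKc.inter (isClosed_biInter fun y hy => ?_)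
    exact isClosed_le continuous_const
      (continuous_const.inner (continuous_const.sub continuous_id))
  -- S is convex
  have hSconv : Convex ℝ S := by
    intro a ha b hb t1 t2 ht1 ht2 hsum
    refine ⟨hKconv ha.1 hb.1 ht1 ht2 hsum, ?_⟩
    intro y hy
    have hsplit : t1 • (y - a) + t2 • (y - b) = (t1 + t2) • y - (t1 • a + t2 • b) := by
      module
    rw [hsum, one_smul] at hsplit
    have : y - (t1 • a + t2 • b) = t1 • (y - a) + t2 • (y - b) := hsplit.symm
    rw [this, inner_add_right, real_inner_smul_right, real_inner_smul_right]
    have h1 := ha.2 y hy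
    have h2 := hb.2 y hy
    nlinarith
  -- S is nonempty
  have hSne : S.Nonempty := by
    set B : Set E := K ∩ Metric.closedBall x₀ R with hB
    have hBcomp : IsCompact B :=
      IsCompact.of_isClosed_subset (isCompact_closedBall x₀ R)
        (hKc.inter Metric.isClosed_closedBall) Set.inter_subset_right
    set Z : E → Set E := fun y => {x : E | y ∈ K → 0 ≤ ⟪F y, y - x⟫} with hZ
    have hZclosed : ∀ y, IsClosed (Z y) := by
      intro y
      by_cases hy : y ∈ K
      · have : Z y = {x : E | 0 ≤ ⟪F y, y - x⟫} := by
          ext x; simp [hZ, hy]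
        rw [this]
        exact isClosed_le continuous_const
          (continuous_const.inner (continuous_const.sub continuous_id))
      · have : Z y = Set.univ := by
          ext x; simp [hZ, hy]
        rw [this]; exact isClosed_univ
    have hFIP : (B ∩ ⋂ y, Z y).Nonempty := by
      by_contra hemp
      rw [Set.not_nonempty_iff_eq_empty] at hemp
      obtain ⟨t, ht⟩ := hBcomp.elim_finite_subfamily_closed Z hZclosed hemp
      set u : Finset E := insert x₀ (t.filter (· ∈ K)) with hu
      have husub : ↑u ⊆ K := by
        intro y hy
        rcases Finset.mem_insert.mp hy with rfl | hy
        · exact hx₀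
        · exact (Finset.mem_filter.mp hy).2
      have hune : u.Nonempty := ⟨x₀, Finset.mem_insert_self _ _⟩
      obtain ⟨x, hxhull, hxmin⟩ :=
        minty_finite hKconv F hpseudo u.card u rfl hune husub
      have hxK : x ∈ K := convexHull_min husub hKconv hxhull
      have hxball : x ∈ Metric.closedBall x₀ R := by
        have h1 := hxmin x₀ (Finset.mem_insert_self _ _)
        have h2 : ⟪F x₀, x - x₀⟫ ≤ 0 := by
          have : x - x₀ = -(x₀ - x) := by abel
          rw [this, inner_neg_right]; linarith
        rw [Metric.mem_closedBall, dist_eq_norm]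
        exact hR x hxK h2
      have hxZ : x ∈ ⋂ y ∈ t, Z y := by
        simp only [Set.mem_iInter]
        intro y hy hyK
        exact hxmin y (Finset.mem_insert_of_mem (Finset.mem_filter.mpr ⟨hy, hyK⟩))
      have : x ∈ B ∩ ⋂ y ∈ t, Z y := ⟨⟨hxK, hxball⟩, hxZ⟩
      rw [ht] at this
      exact this
    obtain ⟨x, ⟨hxK, _⟩, hxZ⟩ := hFIP
    refine ⟨x, hxK, ?_⟩
    intro y hy
    exact Set.mem_iInter.mp hxZ y hy
  rw [hTSeq]
  exact ⟨hSne, hSconv,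
    IsCompact.of_isClosed_subset (isCompact_closedBall x₀ R) hSclosed hSball⟩
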